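/- Let n and d be positive integers, s : Fin n → ℝ, and W : ℝ. For each feature i define two embedding candidates in EuclideanSpace ℝ (Fin d): v i 0 = s i • e₀ (where e₀ is the standard basis vector supported on the first coordinate) and v i 1 = 0. Then there exists a transformation index l : Fin n → Fin 2 with ‖(Σ_{i : Fin n} v i (l i)) − W • e₀‖ = 0 if and only if there exists a finset S ⊆ Fin n with Σ_{i ∈ S} s i = W. -/

import Mathlib

theorem stmt_16 (n d : ℕ) [NeZero n] [NeZero d]
    (s : Fin n → ℝ) (W : ℝ)
    (v : Fin n → Fin 2 → EuclideanSpace ℝ (Fin d))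
    (hv0 : ∀ i : Fin n, v i 0 = s i • EuclideanSpace.single (0 : Fin d) (1 : ℝ))
    (hv1 : ∀ i : Fin n, v i 1 = 0) :
    (∃ l : Fin n → Fin 2,
        ‖(∑ i, v i (l i)) - W • EuclideanSpace.single (0 : Fin d) (1 : ℝ)‖ = 0) ↔
      (∃ S : Finset (Fin n), ∑ i ∈ S, s i = W) := by
  set e : EuclideanSpace ℝ (Fin d) := EuclideanSpace.single (0 : Fin d) (1 : ℝ) with he
  have hene : e ≠ 0 := by
    intro h
    have := congrArg (fun x : EuclideanSpace ℝ (Fin d) => x (0 : Fin d)) h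
    simp [he, EuclideanSpace.single_apply] at this
  constructor
  · rintro ⟨l, hl⟩
    refine ⟨Finset.univ.filter (fun i => l i = 0), ?_⟩
    have hsum : (∑ i, v i (l i)) = (∑ i ∈ Finset.univ.filter (fun i => l i = 0), s i) • e := by
      rw [Finset.sum_smul]
      rw [← Finset.sum_filter_add_sum_filter_not Finset.univ (fun i => l i = 0)]
      have h1 : ∑ i ∈ Finset.univ.filter (fun i => ¬ l i = 0), v i (l i) = 0 := by
        apply Finset.sum_eq_zero
        intro i hi
        simp only [Finset.mem_filter] at hi
        have : l i = 1 := Fin.eq_one_of_ne_zero _ hi.2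
        rw [this, hv1]
      rw [h1, add_zero]
      apply Finset.sum_congr rfl
      intro i hi
      simp only [Finset.mem_filter] at hi
      rw [hi.2, hv0]
    rw [hsum, ← sub_smul, norm_smul] at hl
    have : |∑ i ∈ Finset.univ.filter (fun i => l i = 0), s i - W| = 0 := by
      rcases mul_eq_zero.mp hl with h | h
      · simpa using h
      · exact absurd (norm_eq_zero.mp h) hene
    have := abs_eq_zero.mp this
    linarith [sub_eq_zero.mp this]
  · rintro ⟨S, hS⟩
    refine ⟨fun i => if i ∈ S then 0 else 1, ?_⟩
    have hsum : (∑ i, v i (if i ∈ S then 0 else 1)) = (∑ i ∈ S, s i) • e := by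
      rw [Finset.sum_smul, ← Finset.sum_subset (Finset.subset_univ S)]
      · apply Finset.sum_congr rfl
        intro i hi
        simp [hi, hv0]
      · intro i _ hi
        simp [hi, hv1]
    rw [hsum, hS, sub_self, norm_zero]
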